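/- Let B = ℂ[x, y, y₁, y₂, …, y_k] (k ≥ 2) and let v₁, …, v₅ be the ℂ-derivations of B defined on generators by: v₁(x) = 1 and v₁ vanishes on all other variables; v₂(y) = 1 and v₂ vanishes on all other variables; v₃(y) = x, v₃(y₁) = 1, and v₃ vanishes on all other variables; v₄(x) = y, v₄(y) = 0, v₄(y_j) = ψ_j, where ψ₁ = −y₁² and ψ_{j+1} = D(ψ_j) − y₁·y_{j+1} with D the total derivative determined by D(x) = 1, D(y) = y₁, D(y_j) = y_{j+1}; v₅(x) = x, v₅(y) = −y, v₅(y_j) = −(j+1)·y_j. (These are the k-th prolongations of the special affine Lie algebra ⟨∂x, ∂y, x∂y, y∂x, x∂x − y∂y⟩ of vector fields on ℂ².) Suppose P ∈ B is nonzero and for each i = 1, …, 5 there exists λ_i ∈ B with v_i(P) = λ_i·P. Then: (a) P lies in the subring ℂ[y₂, …, y_k] (P involves neither x, nor y, nor y₁); (b) P is weighted homogeneous for the weight assignment y_j ↦ j + 1; and (c) v₅(P) = −d·P where d is the weighted degree of P; in particular the weight d is a nonnegative integer, positive unless P is constant. -/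

import Mathlib

open MvPolynomial Finsupp

/-- The polynomial ring `B = ℂ[x, y, y₁, …, y_k]`, with variable indices
`0 ↦ x`, `1 ↦ y`, `j+1 ↦ y_j` for `1 ≤ j ≤ k`. -/
abbrev B (k : ℕ) : Type := MvPolynomial (Fin (k + 2)) ℂ

/-- The variable `x`. -/
noncomputable def xv (k : ℕ) : B k := X ⟨0, by omega⟩

/-- The variable `y`. -/
noncomputable def yv (k : ℕ) : B k := X ⟨1, by omega⟩

/-- The jet variable `y_j` (for `1 ≤ j ≤ k`). -/
noncomputable def yj (k j : ℕ) : B k :=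
  if h : 1 ≤ j ∧ j ≤ k then X ⟨j + 1, by omega⟩ else 0

namespace SAffAux

variable {k : ℕ}

lemma dsum_apply {ι : Type*} (s : Finset ι) (D : ι → Derivation ℂ (B k) (B k)) (a : B k) :
    (∑ i ∈ s, D i) a = ∑ i ∈ s, D i a := by
  induction s using Finset.cons_induction with
  | empty => simp
  | cons i s hi ih => rw [Finset.sum_cons, Derivation.add_apply, ih, Finset.sum_cons]

lemma derivation_apply_eq_sum (v : Derivation ℂ (B k) (B k)) (P : B k) :
    v P = ∑ i : Fin (k+2), v (X i) * pderiv i P := by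
  have h : v = ∑ i : Fin (k+2), v (X i) • pderiv i := by
    apply MvPolynomial.derivation_ext
    intro j
    rw [dsum_apply]
    rw [Finset.sum_eq_single j]
    · rw [Derivation.smul_apply, pderiv_X_self, smul_eq_mul, mul_one]
    · intro b _ hbj
      rw [Derivation.smul_apply, pderiv_X_of_ne hbj.symm, smul_zero]
    · intro h; exact absurd (Finset.mem_univ j) h
  conv_lhs => rw [h]
  rw [dsum_apply]
  exact Finset.sum_congr rfl fun i _ => by rw [Derivation.smul_apply, smul_eq_mul]

lemma coeff_pderiv (i : Fin (k+2)) (Q : B k) (m : Fin (k+2) →₀ ℕ) :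
    coeff m (pderiv i Q) = ((m i : ℂ) + 1) * coeff (m + Finsupp.single i 1) Q := by
  induction Q using MvPolynomial.induction_on' with
  | add p q hp hq => rw [map_add, coeff_add, coeff_add, hp, hq, mul_add]
  | monomial s a =>
    rw [pderiv_monomial, coeff_monomial, coeff_monomial]
    by_cases hs : s i = 0
    · have hne : s ≠ m + Finsupp.single i 1 := by
        intro h
        have := congrArg (fun f => f i) h
        simp [hs] at this
      rw [hs, if_neg hne]
      push_cast
      split_ifs <;> ring
    · have hle : Finsupp.single i 1 ≤ s := by
        rw [Finsupp.single_le_iff]; omega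
      have hiff : m = s - Finsupp.single i 1 ↔ m + Finsupp.single i 1 = s := by
        constructor
        · rintro rfl
          exact tsub_add_cancel_of_le hle
        · rintro rfl
          rw [add_tsub_cancel_right]
      by_cases h : m + Finsupp.single i 1 = s
      · rw [if_pos (hiff.2 h).symm, if_pos h.symm]
        have : s i = m i + 1 := by
          rw [← h]; simp
        rw [this]
        push_cast
        ring
      · rw [if_neg (fun hh => h (hiff.1 hh.symm)), if_neg (fun hh => h hh.symm), mul_zero]

lemma coeff_X_mul_pderiv (i : Fin (k+2)) (Q : B k) (m : Fin (k+2) →₀ ℕ) :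
    coeff m (X i * pderiv i Q) = (m i : ℂ) * coeff m Q := by
  classical
  rw [coeff_X_mul' m i (pderiv i Q)]
  by_cases h : i ∈ m.support
  · rw [if_pos h]
    have hle : Finsupp.single i 1 ≤ m := by
      rw [Finsupp.single_le_iff]
      have := Finsupp.mem_support_iff.1 h; omega
    rw [coeff_pderiv, tsub_add_cancel_of_le hle]
    congr 1
    have hmi : 1 ≤ m i := by have := Finsupp.mem_support_iff.1 h; omega
    rw [Finsupp.tsub_apply, Finsupp.single_eq_same]
    push_cast [Nat.cast_sub hmi]
    ring
  · rw [if_neg h]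
    have : m i = 0 := Finsupp.notMem_support_iff.1 h
    rw [this]
    push_cast
    ring

lemma sum_components (u : Fin (k+2) → ℕ) (Q : B k) :
    ∑ d ∈ Finset.range (weightedTotalDegree u Q + 1),
      weightedHomogeneousComponent u d Q = Q := by
  ext m
  rw [coeff_sum]
  simp only [coeff_weightedHomogeneousComponent]
  rw [Finset.sum_ite_eq (Finset.range (weightedTotalDegree u Q + 1)) (weight u m)
    (fun _ => coeff m Q)]
  split_ifs with h
  · rfl
  · by_cases hc : coeff m Q = 0
    · exact hc.symm
    · exact absurd (Finset.mem_range.2 (Nat.lt_succ_of_le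
        (le_weightedTotalDegree u (MvPolynomial.mem_support_iff.2 hc)))) h

lemma component_top_ne_zero (u : Fin (k+2) → ℕ) (Q : B k) (hQ : Q ≠ 0) :
    weightedHomogeneousComponent u (weightedTotalDegree u Q) Q ≠ 0 := by
  obtain ⟨m, hm, hsup⟩ := Finset.exists_mem_eq_sup Q.support
    (Finset.nonempty_of_ne_empty (mt MvPolynomial.support_eq_empty.1 hQ)) (fun s => weight u s)
  intro h0
  have hc := coeff_weightedHomogeneousComponent (w := u) (weightedTotalDegree u Q) Q m
  rw [h0, coeff_zero, if_pos (by exact hsup.symm)] at hc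
  exact (MvPolynomial.mem_support_iff.1 hm) hc.symm

lemma top_coeff_exists (u : Fin (k+2) → ℕ) (l P : B k) (hl : l ≠ 0) (hP : P ≠ 0) :
    ∃ m : Fin (k+2) →₀ ℕ, coeff m (l * P) ≠ 0 ∧
      weight u m = weightedTotalDegree u l + weightedTotalDegree u P := by
  classical
  set E := weightedTotalDegree u l with hE
  set N := weightedTotalDegree u P with hN
  have hlE := component_top_ne_zero u l hl
  have hPN := component_top_ne_zero u P hP
  have hmul : weightedHomogeneousComponent u (E + N) (l * P) =
      weightedHomogeneousComponent u E l * weightedHomogeneousComponent u N P := by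
    conv_lhs => rw [← sum_components u l, ← sum_components u P, Finset.sum_mul_sum,
      map_sum]
    rw [Finset.sum_eq_single_of_mem E (Finset.self_mem_range_succ E)]
    · rw [map_sum, Finset.sum_eq_single_of_mem N (Finset.self_mem_range_succ N)]
      · have hmem : weightedHomogeneousComponent u E l * weightedHomogeneousComponent u N P ∈
            weightedHomogeneousSubmodule ℂ u (E + N) :=
          (mem_weightedHomogeneousSubmodule _ _ _ _).2
            ((weightedHomogeneousComponent_isWeightedHomogeneous E l).mul
              (weightedHomogeneousComponent_isWeightedHomogeneous N P))
        rw [weightedHomogeneousComponent_of_mem hmem, if_pos rfl]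
      · intro d hd hdne
        have hmem : weightedHomogeneousComponent u E l * weightedHomogeneousComponent u d P ∈
            weightedHomogeneousSubmodule ℂ u (E + d) :=
          (mem_weightedHomogeneousSubmodule _ _ _ _).2
            ((weightedHomogeneousComponent_isWeightedHomogeneous E l).mul
              (weightedHomogeneousComponent_isWeightedHomogeneous d P))
        rw [weightedHomogeneousComponent_of_mem hmem, if_neg (by omega)]
    · intro e he hene
      rw [map_sum, Finset.sum_eq_zero]
      intro d hd
      have hmem : weightedHomogeneousComponent u e l * weightedHomogeneousComponent u d P ∈
          weightedHomogeneousSubmodule ℂ u (e + d) :=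
        (mem_weightedHomogeneousSubmodule _ _ _ _).2
          ((weightedHomogeneousComponent_isWeightedHomogeneous e l).mul
            (weightedHomogeneousComponent_isWeightedHomogeneous d P))
      rw [weightedHomogeneousComponent_of_mem hmem, if_neg]
      rw [Finset.mem_range] at he hd
      omega
  have hne : weightedHomogeneousComponent u E l * weightedHomogeneousComponent u N P ≠ 0 :=
    mul_ne_zero hlE hPN
  rw [← hmul] at hne
  obtain ⟨m, hm⟩ := MvPolynomial.ne_zero_iff.1 hne
  rw [coeff_weightedHomogeneousComponent] at hm
  by_cases h : weight u m = E + N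
  · exact ⟨m, by rwa [if_pos h] at hm, h⟩
  · rw [if_neg h] at hm; exact absurd rfl hm

lemma weight_single_var (i : Fin (k+2)) (m : Fin (k+2) →₀ ℕ) :
    weight (fun j => if j = i then 1 else 0) m = m i := by
  classical
  rw [Finsupp.weight_apply, Finsupp.sum]
  simp only [smul_eq_mul, mul_ite, mul_one, mul_zero]
  rw [Finset.sum_ite_eq' m.support i (fun j => m j)]
  split_ifs with h
  · rfl
  · exact (Finsupp.notMem_support_iff.1 h).symm

lemma weight_eq_sum (w : Fin (k+2) → ℕ) (m : Fin (k+2) →₀ ℕ) :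
    weight w m = ∑ i : Fin (k+2), m i * w i := by
  rw [Finsupp.weight_apply, Finsupp.sum_fintype]
  · simp [smul_eq_mul]
  · intro i; simp

lemma pd_zero (i : Fin (k+2)) (P : B k) (hP : P ≠ 0)
    (h : ∃ l : B k, pderiv i P = l * P) : pderiv i P = 0 := by
  classical
  obtain ⟨l, hl⟩ := h
  by_cases hl0 : l = 0
  · rw [hl, hl0, zero_mul]
  exfalso
  obtain ⟨m, hm, hw⟩ := top_coeff_exists (fun j => if j = i then 1 else 0) l P hl0 hP
  rw [← hl] at hm
  have h2 : coeff (m + Finsupp.single i 1) P ≠ 0 := by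
    intro h0
    rw [coeff_pderiv, h0, mul_zero] at hm
    exact hm rfl
  have hle := le_weightedTotalDegree (fun j => if j = i then 1 else 0)
    (MvPolynomial.mem_support_iff.2 h2)
  rw [weight_single_var] at hle hw
  rw [Finsupp.add_apply, Finsupp.single_eq_same] at hle
  omega

lemma coeff_eq_zero_of_pd_zero (i : Fin (k+2)) (P : B k) (h : pderiv i P = 0)
    (m : Fin (k+2) →₀ ℕ) (hm : coeff m P ≠ 0) : m i = 0 := by
  by_contra hne
  set m' : Fin (k+2) →₀ ℕ := m - Finsupp.single i 1 with hm'
  have hthis := coeff_pderiv i P m'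
  have hle : Finsupp.single i 1 ≤ m := by rw [Finsupp.single_le_iff]; omega
  rw [h, coeff_zero, hm', tsub_add_cancel_of_le hle] at hthis
  have hfac : ((m' i : ℂ) + 1) ≠ 0 := by
    rw [hm', Finsupp.tsub_apply, Finsupp.single_eq_same]
    have he : ((m i - 1 : ℕ) : ℂ) + 1 = ((m i : ℕ) : ℂ) := by
      push_cast [Nat.cast_sub (by omega : 1 ≤ m i)]; ring
    rw [he]
    exact_mod_cast hne
  exact hm ((mul_eq_zero.1 hthis.symm).resolve_left hfac)

lemma X_eq_yj (hk : 2 ≤ k) (i : Fin (k+2)) (h : 2 ≤ (i : ℕ)) :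
    (X i : B k) = yj k ((i : ℕ) - 1) := by
  have hlt : (i : ℕ) < k + 2 := i.isLt
  rw [yj, dif_pos ⟨by omega, by omega⟩]
  congr 1
  apply Fin.ext
  simp
  omega

lemma v1_sum (hk : 2 ≤ k) (v : Derivation ℂ (B k) (B k))
    (hx : v (xv k) = 1) (hy : v (yv k) = 0)
    (hj : ∀ j, 1 ≤ j → j ≤ k → v (yj k j) = 0) (P : B k) :
    v P = pderiv (⟨0, by omega⟩ : Fin (k+2)) P := by
  rw [derivation_apply_eq_sum]
  rw [Finset.sum_eq_single (⟨0, by omega⟩ : Fin (k+2))]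
  · rw [show (X (⟨0, by omega⟩ : Fin (k+2)) : B k) = xv k from rfl, hx, one_mul]
  · intro b _ hb
    have hb0 : (b : ℕ) ≠ 0 := fun h => hb (Fin.ext h)
    by_cases h1 : (b : ℕ) = 1
    · rw [show (X b : B k) = yv k from by rw [yv]; exact congrArg X (Fin.ext h1), hy, zero_mul]
    · have hlt : (b : ℕ) < k + 2 := b.isLt
      rw [X_eq_yj hk b (by omega), hj ((b : ℕ) - 1) (by omega) (by omega), zero_mul]
  · intro h; exact absurd (Finset.mem_univ _) h

lemma v2_sum (hk : 2 ≤ k) (v : Derivation ℂ (B k) (B k))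
    (hx : v (xv k) = 0) (hy : v (yv k) = 1)
    (hj : ∀ j, 1 ≤ j → j ≤ k → v (yj k j) = 0) (P : B k) :
    v P = pderiv (⟨1, by omega⟩ : Fin (k+2)) P := by
  rw [derivation_apply_eq_sum]
  rw [Finset.sum_eq_single (⟨1, by omega⟩ : Fin (k+2))]
  · rw [show (X (⟨1, by omega⟩ : Fin (k+2)) : B k) = yv k from rfl, hy, one_mul]
  · intro b _ hb
    have hb1 : (b : ℕ) ≠ 1 := fun h => hb (Fin.ext h)
    by_cases h0 : (b : ℕ) = 0
    · rw [show (X b : B k) = xv k from by rw [xv]; exact congrArg X (Fin.ext h0), hx, zero_mul]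
    · have hlt : (b : ℕ) < k + 2 := b.isLt
      rw [X_eq_yj hk b (by omega), hj ((b : ℕ) - 1) (by omega) (by omega), zero_mul]
  · intro h; exact absurd (Finset.mem_univ _) h

lemma v3_sum (hk : 2 ≤ k) (v : Derivation ℂ (B k) (B k))
    (hx : v (xv k) = 0) (h1 : v (yj k 1) = 1)
    (hj : ∀ j, 2 ≤ j → j ≤ k → v (yj k j) = 0) (P : B k)
    (hpd1 : pderiv (⟨1, by omega⟩ : Fin (k+2)) P = 0) :
    v P = pderiv (⟨2, by omega⟩ : Fin (k+2)) P := by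
  rw [derivation_apply_eq_sum]
  rw [Finset.sum_eq_single (⟨2, by omega⟩ : Fin (k+2))]
  · have hX2 : (X (⟨2, by omega⟩ : Fin (k+2)) : B k) = yj k 1 := by
      rw [yj, dif_pos ⟨le_refl 1, by omega⟩]
    rw [hX2, h1, one_mul]
  · intro b _ hb
    have hb2 : (b : ℕ) ≠ 2 := fun h => hb (Fin.ext h)
    by_cases h0 : (b : ℕ) = 0
    · rw [show (X b : B k) = xv k from by rw [xv]; exact congrArg X (Fin.ext h0), hx, zero_mul]
    · by_cases hb1 : (b : ℕ) = 1
      · rw [show b = (⟨1, by omega⟩ : Fin (k+2)) from Fin.ext hb1, hpd1, mul_zero]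
      · have hlt : (b : ℕ) < k + 2 := b.isLt
        rw [X_eq_yj hk b (by omega), hj ((b : ℕ) - 1) (by omega) (by omega), zero_mul]
  · intro h; exact absurd (Finset.mem_univ _) h

lemma v5_sum (hk : 2 ≤ k) (v : Derivation ℂ (B k) (B k))
    (hx : v (xv k) = xv k) (hy : v (yv k) = -(yv k))
    (hj : ∀ j, 1 ≤ j → j ≤ k → v (yj k j) = -(C ((j : ℂ) + 1) * yj k j)) (P : B k)
    (hpd0 : pderiv (⟨0, by omega⟩ : Fin (k+2)) P = 0) :
    v P = ∑ i : Fin (k+2), -(C ((i : ℕ) : ℂ) * X i) * pderiv i P := by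
  rw [derivation_apply_eq_sum]
  apply Finset.sum_congr rfl
  intro i _
  by_cases h0 : (i : ℕ) = 0
  · rw [show i = (⟨0, by omega⟩ : Fin (k+2)) from Fin.ext h0, hpd0, mul_zero, mul_zero]
  · by_cases h1 : (i : ℕ) = 1
    · rw [show (X i : B k) = yv k from by rw [yv]; exact congrArg X (Fin.ext h1), hy, h1]
      norm_num
    · have hlt : (i : ℕ) < k + 2 := i.isLt
      rw [X_eq_yj hk i (by omega), hj ((i : ℕ) - 1) (by omega) (by omega)]
      have : (((i : ℕ) - 1 : ℕ) : ℂ) + 1 = ((i : ℕ) : ℂ) := by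
        push_cast [Nat.cast_sub (by omega : 1 ≤ (i : ℕ))]
        ring
      rw [this]

lemma eq_C_of_hom (hk : 2 ≤ k) (P : B k)
    (h0 : ∀ m : Fin (k+2) →₀ ℕ, coeff m P ≠ 0 → m ⟨0, by omega⟩ = 0)
    (hhom : IsWeightedHomogeneous (fun i : Fin (k+2) => (i : ℕ)) P 0) :
    P = C (coeff 0 P) := by
  ext m
  rw [coeff_C]
  by_cases hm : (0 : Fin (k+2) →₀ ℕ) = m
  · rw [if_pos hm, ← hm]
  · rw [if_neg hm]
    by_contra hc
    apply hm
    have hw := hhom hc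
    rw [weight_eq_sum] at hw
    have hz : ∀ i : Fin (k+2), m i * (i : ℕ) = 0 := by
      intro i
      exact (Finset.sum_eq_zero_iff.1 hw) i (Finset.mem_univ i)
    ext i
    by_cases hi : (i : ℕ) = 0
    · rw [show i = (⟨0, by omega⟩ : Fin (k+2)) from Fin.ext hi]
      exact (h0 m hc).symm
    · have := Nat.mul_eq_zero.1 (hz i)
      simp only [Finsupp.coe_zero, Pi.zero_apply]
      tauto

end SAffAux

open SAffAux in
/-- Let `v₁, …, v₅` be the `k`-th prolongations of the special affine
algebra `⟨∂x, ∂y, x∂y, y∂x, x∂x − y∂y⟩` acting on `B = ℂ[x, y, y₁, …, y_k]`, described on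
generators as in the hypotheses (`D` is the total derivative and `ψ_j = v₄(y_j)` is defined
by `ψ₁ = −y₁²`, `ψ_{j+1} = D(ψ_j) − y₁·y_{j+1}`).  If `P ≠ 0` and each `v_i(P) = λ_i·P`
for some `λ_i ∈ B`, then: (a) `P ∈ ℂ[y₂, …, y_k]`; (b) `P` is weighted homogeneous for the
weight assignment `y_j ↦ j + 1`; (c) `v₅(P) = −d·P` where `d` is the weighted degree of `P`,
and `d > 0` unless `P` is constant. -/
theorem saff_polynomial_relative_invariant_structure
    (k : ℕ) (hk : 2 ≤ k)
    (D v1 v2 v3 v4 v5 : Derivation ℂ (B k) (B k)) (ψ : ℕ → B k)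
    (hDx : D (xv k) = 1) (hDy : D (yv k) = yj k 1)
    (hDj : ∀ j, 1 ≤ j → j < k → D (yj k j) = yj k (j + 1))
    (hψ1 : ψ 1 = -(yj k 1) ^ 2)
    (hψrec : ∀ j, 1 ≤ j → j + 1 ≤ k → ψ (j + 1) = D (ψ j) - yj k 1 * yj k (j + 1))
    (hv1x : v1 (xv k) = 1) (hv1y : v1 (yv k) = 0)
    (hv1j : ∀ j, 1 ≤ j → j ≤ k → v1 (yj k j) = 0)
    (hv2x : v2 (xv k) = 0) (hv2y : v2 (yv k) = 1)
    (hv2j : ∀ j, 1 ≤ j → j ≤ k → v2 (yj k j) = 0)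
    (hv3x : v3 (xv k) = 0) (hv3y : v3 (yv k) = xv k)
    (hv31 : v3 (yj k 1) = 1)
    (hv3j : ∀ j, 2 ≤ j → j ≤ k → v3 (yj k j) = 0)
    (hv4x : v4 (xv k) = yv k) (hv4y : v4 (yv k) = 0)
    (hv4j : ∀ j, 1 ≤ j → j ≤ k → v4 (yj k j) = ψ j)
    (hv5x : v5 (xv k) = xv k) (hv5y : v5 (yv k) = -(yv k))
    (hv5j : ∀ j, 1 ≤ j → j ≤ k → v5 (yj k j) = -(C ((j : ℂ) + 1) * yj k j))
    (P : B k) (hP : P ≠ 0)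
    (h1 : ∃ l : B k, v1 P = l * P) (h2 : ∃ l : B k, v2 P = l * P)
    (h3 : ∃ l : B k, v3 P = l * P) (h4 : ∃ l : B k, v4 P = l * P)
    (h5 : ∃ l : B k, v5 P = l * P) :
    P ∈ Algebra.adjoin ℂ ((fun j => yj k j) '' Set.Icc 2 k) ∧
    ∃ d : ℕ,
      IsWeightedHomogeneous (fun i : Fin (k + 2) => (i : ℕ)) P d ∧
      v5 P = -(C (d : ℂ) * P) ∧
      ((∀ c : ℂ, P ≠ C c) → 0 < d) := by
  classical
  obtain ⟨l1, hl1⟩ := h1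
  obtain ⟨l2, hl2⟩ := h2
  obtain ⟨l3, hl3⟩ := h3
  obtain ⟨l5, hl5⟩ := h5
  have hpd0 : pderiv (⟨0, by omega⟩ : Fin (k+2)) P = 0 :=
    pd_zero _ P hP ⟨l1, by rw [← v1_sum hk v1 hv1x hv1y hv1j P, hl1]⟩
  have hpd1 : pderiv (⟨1, by omega⟩ : Fin (k+2)) P = 0 :=
    pd_zero _ P hP ⟨l2, by rw [← v2_sum hk v2 hv2x hv2y hv2j P, hl2]⟩
  have hpd2 : pderiv (⟨2, by omega⟩ : Fin (k+2)) P = 0 :=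
    pd_zero _ P hP ⟨l3, by rw [← v3_sum hk v3 hv3x hv31 hv3j P hpd1, hl3]⟩
  have s0 : ∀ m : Fin (k+2) →₀ ℕ, coeff m P ≠ 0 → m ⟨0, by omega⟩ = 0 :=
    fun m hm => coeff_eq_zero_of_pd_zero _ P hpd0 m hm
  have s1 : ∀ m : Fin (k+2) →₀ ℕ, coeff m P ≠ 0 → m ⟨1, by omega⟩ = 0 :=
    fun m hm => coeff_eq_zero_of_pd_zero _ P hpd1 m hm
  have s2 : ∀ m : Fin (k+2) →₀ ℕ, coeff m P ≠ 0 → m ⟨2, by omega⟩ = 0 :=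
    fun m hm => coeff_eq_zero_of_pd_zero _ P hpd2 m hm
  constructor
  · -- Part (a)
    rw [show P = ∑ m ∈ P.support, monomial m (coeff m P) from MvPolynomial.as_sum P]
    apply Subalgebra.sum_mem
    intro m hm
    rw [monomial_eq]
    apply mul_mem
    · have halg := (Algebra.adjoin ℂ ((fun j => yj k j) '' Set.Icc 2 k)).algebraMap_mem
        (coeff m P)
      rwa [MvPolynomial.algebraMap_eq] at halg
    · rw [Finsupp.prod]
      apply Subalgebra.prod_mem
      intro i hi
      refine pow_mem (Algebra.subset_adjoin ?_) _
      have hm0 : coeff m P ≠ 0 := MvPolynomial.mem_support_iff.1 hm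
      have hi' : m i ≠ 0 := Finsupp.mem_support_iff.1 hi
      have h3i : 3 ≤ (i : ℕ) := by
        by_contra hlt
        push_neg at hlt
        have h012 : (i : ℕ) = 0 ∨ (i : ℕ) = 1 ∨ (i : ℕ) = 2 := by omega
        rcases h012 with h | h | h
        · exact hi' (by rw [show i = (⟨0, by omega⟩ : Fin (k+2)) from Fin.ext h]; exact s0 m hm0)
        · exact hi' (by rw [show i = (⟨1, by omega⟩ : Fin (k+2)) from Fin.ext h]; exact s1 m hm0)
        · exact hi' (by rw [show i = (⟨2, by omega⟩ : Fin (k+2)) from Fin.ext h]; exact s2 m hm0)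
      have hlt : (i : ℕ) < k + 2 := i.isLt
      exact ⟨(i : ℕ) - 1, Set.mem_Icc.2 ⟨by omega, by omega⟩, (X_eq_yj hk i (by omega)).symm⟩
  · -- Parts (b), (c)
    set w : Fin (k+2) → ℕ := fun i => (i : ℕ) with hwdef
    have key5 : ∀ m : Fin (k+2) →₀ ℕ,
        coeff m (v5 P) = -((weight w m : ℕ) : ℂ) * coeff m P := by
      intro m
      rw [v5_sum hk v5 hv5x hv5y hv5j P hpd0, coeff_sum]
      have hterm : ∀ i : Fin (k+2), coeff m (-(C ((i : ℕ) : ℂ) * X i) * pderiv i P)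
          = -((m i * (i : ℕ) : ℕ) : ℂ) * coeff m P := by
        intro i
        rw [neg_mul, coeff_neg, mul_assoc, coeff_C_mul, coeff_X_mul_pderiv]
        push_cast
        ring
      rw [Finset.sum_congr rfl fun i _ => hterm i, weight_eq_sum]
      simp only [hwdef]
      push_cast
      rw [neg_mul, Finset.sum_mul, ← Finset.sum_neg_distrib]
      exact Finset.sum_congr rfl fun i _ => by ring
    by_cases hl50 : l5 = 0
    · -- v5 P = 0
      have hz : v5 P = 0 := by rw [hl5, hl50, zero_mul]
      have hhom : IsWeightedHomogeneous w P 0 := by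
        intro m hm
        have hk5 := key5 m
        rw [hz, coeff_zero] at hk5
        have hcast : ((weight w m : ℕ) : ℂ) = 0 := by
          rcases mul_eq_zero.1 hk5.symm with h | h
          · exact neg_eq_zero.1 h
          · exact absurd h hm
        exact_mod_cast hcast
      refine ⟨0, hhom, by rw [hz]; simp, ?_⟩
      intro hnc
      exact absurd (eq_C_of_hom hk P s0 hhom) (hnc (coeff 0 P))
    · set N := weightedTotalDegree w P with hNdef
      obtain ⟨m₀, hm₀, hw₀⟩ := top_coeff_exists w l5 P hl50 hP
      rw [← hl5] at hm₀
      have hcm₀ : coeff m₀ P ≠ 0 := by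
        intro h0; rw [key5 m₀, h0, mul_zero] at hm₀; exact hm₀ rfl
      have hE0 : weightedTotalDegree w l5 = 0 := by
        have hle : weight w m₀ ≤ N := le_weightedTotalDegree w
          (MvPolynomial.mem_support_iff.2 hcm₀)
        omega
      have hl5hom : IsWeightedHomogeneous w l5 0 := by
        intro a ha
        have := le_weightedTotalDegree w (MvPolynomial.mem_support_iff.2 ha)
        omega
      have hcompeq : ∀ n, n ≤ N → -(C ((n : ℕ) : ℂ)) * weightedHomogeneousComponent w n P
          = l5 * weightedHomogeneousComponent w n P := by
        intro n hn
        have hc1 : weightedHomogeneousComponent w n (v5 P)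
            = -(C ((n : ℕ) : ℂ)) * weightedHomogeneousComponent w n P := by
          ext m
          rw [neg_mul, coeff_neg, coeff_C_mul, coeff_weightedHomogeneousComponent,
            coeff_weightedHomogeneousComponent]
          split_ifs with h
          · rw [key5 m, h]; ring
          · rw [mul_zero, neg_zero]
        have hc2 : weightedHomogeneousComponent w n (l5 * P)
            = l5 * weightedHomogeneousComponent w n P := by
          conv_lhs => rw [← sum_components w P, Finset.mul_sum, map_sum]
          rw [Finset.sum_eq_single_of_mem n (Finset.mem_range.2 (by omega))]
          · have hmem : l5 * weightedHomogeneousComponent w n P ∈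
                weightedHomogeneousSubmodule ℂ w n := by
              have := hl5hom.mul (weightedHomogeneousComponent_isWeightedHomogeneous n P)
              rwa [zero_add] at this
            rw [weightedHomogeneousComponent_of_mem hmem, if_pos rfl]
          · intro d hd hdn
            have hmem : l5 * weightedHomogeneousComponent w d P ∈
                weightedHomogeneousSubmodule ℂ w d := by
              have := hl5hom.mul (weightedHomogeneousComponent_isWeightedHomogeneous d P)
              rwa [zero_add] at this
            rw [weightedHomogeneousComponent_of_mem hmem, if_neg (fun h => hdn h.symm)]
        rw [← hc1, ← hc2, hl5]
      have hPN : weightedHomogeneousComponent w N P ≠ 0 := component_top_ne_zero w P hP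
      have hl5N : l5 = -(C ((N : ℕ) : ℂ)) := by
        have heq := hcompeq N le_rfl
        have hsub : (-(C ((N : ℕ) : ℂ)) - l5) * weightedHomogeneousComponent w N P = 0 := by
          rw [sub_mul, heq, sub_self]
        rcases mul_eq_zero.1 hsub with h | h
        · exact (sub_eq_zero.1 h).symm
        · exact absurd h hPN
      have hhom : IsWeightedHomogeneous w P N := by
        intro m hm
        have hnN : weight w m ≤ N := le_weightedTotalDegree w
          (MvPolynomial.mem_support_iff.2 hm)
        have hcn : weightedHomogeneousComponent w (weight w m) P ≠ 0 := by
          intro h0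
          have hcc := coeff_weightedHomogeneousComponent (w := w) (weight w m) P m
          rw [h0, coeff_zero, if_pos rfl] at hcc
          exact hm hcc.symm
        have heq := hcompeq (weight w m) hnN
        rw [hl5N] at heq
        have hsub : (C ((N : ℕ) : ℂ) - C ((weight w m : ℕ) : ℂ)) *
            weightedHomogeneousComponent w (weight w m) P = 0 := by
          rw [sub_mul]
          linear_combination heq
        rcases mul_eq_zero.1 hsub with h | h
        · have hCC : ((N : ℕ) : ℂ) = ((weight w m : ℕ) : ℂ) :=
            MvPolynomial.C_injective _ ℂ (sub_eq_zero.1 h)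
          exact_mod_cast hCC.symm
        · exact absurd h hcn
      refine ⟨N, hhom, ?_, ?_⟩
      · ext m
        rw [key5 m, coeff_neg, coeff_C_mul]
        by_cases hm : coeff m P = 0
        · rw [hm]; ring
        · rw [hhom hm]; ring
      · intro hnc
        by_contra hN0
        have hNz : N = 0 := by omega
        rw [hNz] at hhom
        exact absurd (eq_C_of_hom hk P s0 hhom) (hnc (coeff 0 P))
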